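/- If S is a subset of P^2(F_q) with |S| = q+2 and there exist two distinct points P, Q in S such that no line through P contains at least three points of S and no line through Q contains at least three points of S, then in suitable coordinates S equals S_f for some f(X) in F_q[X] which permutes F_q. -/

import Mathlib

open Polynomial

noncomputable section

lemma vec3_ne_zero_last {F : Type} [Field F] (c d : F) : ![c, d, 1] ≠ 0 := by
  intro h; have := congrFun h 2; simp at this

lemma vec3_e0_ne_zero {F : Type} [Field F] : (![1, 0, 0] : Fin 3 → F) ≠ 0 := by
  intro h; have := congrFun h 0; simp at this

lemma vec3_e1_ne_zero {F : Type} [Field F] : (![0, 1, 0] : Fin 3 → F) ≠ 0 := by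
  intro h; have := congrFun h 1; simp at this

/-- The set `S_f = {(c : f(c) : 1) : c ∈ F_q} ∪ {(1:0:0), (0:1:0)}` in `ℙ²(F_q)`. -/
def Sf {F : Type} [Field F] (f : Polynomial F) : Set (Projectivization F (Fin 3 → F)) :=
  {p | ∃ c : F, p = Projectivization.mk F ![c, f.eval c, 1] (vec3_ne_zero_last c (f.eval c))}
    ∪ {Projectivization.mk F ![1, 0, 0] vec3_e0_ne_zero,
       Projectivization.mk F ![0, 1, 0] vec3_e1_ne_zero}

open Module
section helpers
variable {F : Type} [Field F]

instance projFinite [Fintype F] : Finite (Projectivization F (Fin 3 → F)) := by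
  unfold Projectivization; infer_instance

lemma mkvec_eq_iff (a b a' b' : F) (h1 : (![a,b,1] : Fin 3 → F) ≠ 0) (h2 : (![a',b',1] : Fin 3 → F) ≠ 0) :
    Projectivization.mk F ![a,b,1] h1 = Projectivization.mk F ![a',b',1] h2 ↔ a = a' ∧ b = b' := by
  rw [Projectivization.mk_eq_mk_iff]
  constructor
  · rintro ⟨u, hu⟩
    have h0 := congrFun hu 0
    have hb := congrFun hu 1
    have hc := congrFun hu 2
    simp [Units.smul_def] at h0 hb hc
    rw [hc] at h0 hb
    simp at h0 hb
    exact ⟨h0.symm, hb.symm⟩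
  · rintro ⟨rfl, rfl⟩; exact ⟨1, by simp⟩

lemma finrank_ker_two (φ : (Fin 3 → F) →ₗ[F] F) (hφ : φ ≠ 0) :
    finrank F (LinearMap.ker φ) = 2 := by
  have hsurj : Function.Surjective φ := by
    obtain ⟨x, hx⟩ : ∃ x, φ x ≠ 0 := by
      by_contra h; push_neg at h; exact hφ (LinearMap.ext fun v => by simp [h v])
    intro c
    exact ⟨(c / φ x) • x, by simp [div_mul_cancel₀ _ hx]⟩
  have h1 : finrank F (LinearMap.range φ) = 1 := by
    rw [LinearMap.range_eq_top.mpr hsurj, finrank_top, Module.finrank_self]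
  have h2 := LinearMap.finrank_range_add_finrank_ker φ
  rw [h1] at h2
  have h3 : finrank F (Fin 3 → F) = 3 := by simp
  omega

lemma submodule_le_ker (v : Fin 3 → F) (hv : v ≠ 0) (φ : (Fin 3 → F) →ₗ[F] F) :
    (Projectivization.mk F v hv).submodule ≤ LinearMap.ker φ ↔ φ v = 0 := by
  rw [Projectivization.submodule_mk, Submodule.span_singleton_le_iff_mem, LinearMap.mem_ker]

def lfun (i : Fin 3) (a : F) : (Fin 3 → F) →ₗ[F] F := LinearMap.proj i - a • LinearMap.proj 2

lemma lfun_apply (i : Fin 3) (a : F) (v : Fin 3 → F) : lfun i a v = v i - a * v 2 := rfl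

lemma lfun_ne_zero0 (a : F) : lfun (0 : Fin 3) a ≠ 0 := by
  intro h; have := congrArg (fun ψ => ψ ![1,0,0]) h; simp [lfun_apply] at this

lemma lfun_ne_zero1 (a : F) : lfun (1 : Fin 3) a ≠ 0 := by
  intro h; have := congrArg (fun ψ => ψ ![0,1,0]) h; simp [lfun_apply] at this

lemma pi2_ne_zero : (LinearMap.proj 2 : (Fin 3 → F) →ₗ[F] F) ≠ 0 := by
  intro h; have := congrArg (fun ψ => ψ ![0,0,1]) h; simp at this

lemma rep_affine (x : Projectivization F (Fin 3 → F)) (h : x.rep 2 ≠ 0) :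
    x = Projectivization.mk F ![x.rep 0 / x.rep 2, x.rep 1 / x.rep 2, 1]
      (vec3_ne_zero_last _ _) := by
  conv_lhs => rw [← x.mk_rep]
  rw [Projectivization.mk_eq_mk_iff]
  refine ⟨Units.mk0 (x.rep 2) h, funext fun i => ?_⟩
  fin_cases i <;> simp [Units.smul_def, mul_div_cancel₀ _ h]

lemma e0_ne_e1 : Projectivization.mk F (![1,0,0] : Fin 3 → F) vec3_e0_ne_zero ≠
    Projectivization.mk F (![0,1,0] : Fin 3 → F) vec3_e1_ne_zero := by
  rw [Ne, Projectivization.mk_eq_mk_iff]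
  rintro ⟨u, hu⟩
  have := congrFun hu 0
  simp [Units.smul_def] at this

lemma ncard_three {α : Type*} {x y z : α} (hxy : x ≠ y) (hxz : x ≠ z) (hyz : y ≠ z) :
    ({x, y, z} : Set α).ncard = 3 :=
  Set.ncard_eq_three.mpr ⟨x, y, z, hxy, hxz, hyz, rfl⟩
end helpers

theorem core (F : Type) [Field F] [Fintype F]
    (S : Set (Projectivization F (Fin 3 → F)))
    (hcard : S.ncard = Fintype.card F + 2)
    (hP : Projectivization.mk F (![1,0,0] : Fin 3 → F) vec3_e0_ne_zero ∈ S)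
    (hQ : Projectivization.mk F (![0,1,0] : Fin 3 → F) vec3_e1_ne_zero ∈ S)
    (hlineP : ∀ W : Submodule F (Fin 3 → F), Module.finrank F W = 2 →
      (Projectivization.mk F (![1,0,0] : Fin 3 → F) vec3_e0_ne_zero).submodule ≤ W →
      {x ∈ S | x.submodule ≤ W}.ncard ≤ 2)
    (hlineQ : ∀ W : Submodule F (Fin 3 → F), Module.finrank F W = 2 →
      (Projectivization.mk F (![0,1,0] : Fin 3 → F) vec3_e1_ne_zero).submodule ≤ W →
      {x ∈ S | x.submodule ≤ W}.ncard ≤ 2) :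
    ∃ f : Polynomial F, S = Sf f ∧ Function.Bijective fun x : F => f.eval x := by
  classical
  set P0 := Projectivization.mk F (![1,0,0] : Fin 3 → F) vec3_e0_ne_zero with hP0
  set Q0 := Projectivization.mk F (![0,1,0] : Fin 3 → F) vec3_e1_ne_zero with hQ0
  have hSfin : S.Finite := Set.toFinite S
  have hpair : ({P0, Q0} : Set _) ⊆ S := by
    rintro x (rfl | rfl) <;> assumption
  set T : Set (Projectivization F (Fin 3 → F)) := S \ {P0, Q0} with hT
  have hTsub : T ⊆ S := Set.diff_subset
  have hTcard : T.ncard = Fintype.card F := by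
    rw [hT, Set.ncard_diff hpair, hcard, Set.ncard_pair e0_ne_e1]
    omega
  -- helper : no three distinct points of S on a line through P0/Q0
  have key : ∀ (φ : (Fin 3 → F) →ₗ[F] F), φ ≠ 0 →
      ∀ x y z : Projectivization F (Fin 3 → F), x ≠ y → x ≠ z → y ≠ z →
      x ∈ S → y ∈ S → z ∈ S →
      x.submodule ≤ LinearMap.ker φ → y.submodule ≤ LinearMap.ker φ →
      z.submodule ≤ LinearMap.ker φ →
      ((x.submodule ≤ LinearMap.ker φ → P0.submodule ≤ LinearMap.ker φ →
        x = x) → True) → -- dummy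
      (P0.submodule ≤ LinearMap.ker φ ∨ Q0.submodule ≤ LinearMap.ker φ) → False := by
    intro φ hφ x y z hxy hxz hyz hx hy hz hkx hky hkz _ hor
    have hsub : ({x, y, z} : Set _) ⊆ {s ∈ S | s.submodule ≤ LinearMap.ker φ} := by
      rintro w (rfl | rfl | rfl) <;> exact ⟨by assumption, by assumption⟩
    have h3 : 3 ≤ ({s ∈ S | s.submodule ≤ LinearMap.ker φ} : Set _).ncard :=
      le_of_eq_of_le (ncard_three hxy hxz hyz).symm
        (Set.ncard_le_ncard hsub (hSfin.subset (Set.sep_subset _ _)))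
    rcases hor with h | h
    · have := hlineP _ (finrank_ker_two φ hφ) h; omega
    · have := hlineQ _ (finrank_ker_two φ hφ) h; omega
  -- every point of T is affine
  have haff : ∀ x ∈ T, x.rep 2 ≠ 0 := by
    intro x hx h2
    have hxk : x.submodule ≤ LinearMap.ker (LinearMap.proj 2 : (Fin 3 → F) →ₗ[F] F) := by
      rw [Projectivization.submodule_eq, Submodule.span_singleton_le_iff_mem,
        LinearMap.mem_ker]
      exact h2
    have hxP : x ≠ P0 := fun h => hx.2 (by simp [h])
    have hxQ : x ≠ Q0 := fun h => hx.2 (by simp [h])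
    refine key (LinearMap.proj 2) pi2_ne_zero P0 Q0 x e0_ne_e1 hxP.symm hxQ.symm hP hQ
      (hTsub hx) ?_ ?_ hxk (fun _ => trivial) (Or.inl ?_)
    · rw [hP0, submodule_le_ker]; simp
    · rw [hQ0, submodule_le_ker]; simp
    · rw [hP0, submodule_le_ker]; simp
  set A : T → F := fun t => (t : Projectivization F (Fin 3 → F)).rep 0 /
      (t : Projectivization F (Fin 3 → F)).rep 2 with hA
  set B : T → F := fun t => (t : Projectivization F (Fin 3 → F)).rep 1 /
      (t : Projectivization F (Fin 3 → F)).rep 2 with hB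
  have hmk : ∀ t : T, (t : Projectivization F (Fin 3 → F)) =
      Projectivization.mk F ![A t, B t, 1] (vec3_ne_zero_last _ _) :=
    fun t => rep_affine _ (haff _ t.2)
  have hkermem : ∀ (t : T) (i : Fin 3) (a : F),
      (t : Projectivization F (Fin 3 → F)).submodule ≤ LinearMap.ker (lfun i a) ↔
      lfun i a (![A t, B t, 1] : Fin 3 → F) = 0 := by
    intro t i a
    conv_lhs => rw [hmk t]
    rw [submodule_le_ker]
  have hTne : ∀ (t : T), (t : Projectivization F (Fin 3 → F)) ≠ P0 ∧
      (t : Projectivization F (Fin 3 → F)) ≠ Q0 := by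
    intro t
    exact ⟨fun h => t.2.2 (by simp [h]), fun h => t.2.2 (by simp [h])⟩
  have hAinj : Function.Injective A := by
    intro t t' hA'
    by_contra hne
    have hne' : (t : Projectivization F (Fin 3 → F)) ≠ (t' : _) := fun h => hne (Subtype.ext h)
    refine key (lfun 0 (A t)) (lfun_ne_zero0 _) Q0 t t' (hTne t).2.symm (hTne t').2.symm
      hne' hQ t.2.1 t'.2.1 ?_ ?_ ?_ (fun _ => trivial) (Or.inr ?_)
    · rw [hQ0, submodule_le_ker]; simp [lfun_apply]
    · rw [hkermem]; simp [lfun_apply]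
    · rw [hkermem]; simp [lfun_apply, hA']
    · rw [hQ0, submodule_le_ker]; simp [lfun_apply]
  have hBinj : Function.Injective B := by
    intro t t' hB'
    by_contra hne
    have hne' : (t : Projectivization F (Fin 3 → F)) ≠ (t' : _) := fun h => hne (Subtype.ext h)
    refine key (lfun 1 (B t)) (lfun_ne_zero1 _) P0 t t' (hTne t).1.symm (hTne t').1.symm
      hne' hP t.2.1 t'.2.1 ?_ ?_ ?_ (fun _ => trivial) (Or.inl ?_)
    · rw [hP0, submodule_le_ker]; simp [lfun_apply]
    · rw [hkermem]; simp [lfun_apply]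
    · rw [hkermem]; simp [lfun_apply, hB']
    · rw [hP0, submodule_le_ker]; simp [lfun_apply]
  have hcardT : Nat.card T = Nat.card F := by
    rw [Nat.card_coe_set_eq, hTcard, Nat.card_eq_fintype_card]
  have hAbij : Function.Bijective A :=
    (Nat.bijective_iff_injective_and_card A).mpr ⟨hAinj, hcardT⟩
  set e : T ≃ F := Equiv.ofBijective A hAbij with he
  set h : F → F := B ∘ e.symm with hh
  have hhA : ∀ t : T, h (A t) = B t := by
    intro t
    show B (e.symm (e t)) = B t
    rw [e.symm_apply_apply]
  have hhbij : Function.Bijective h :=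
    Finite.injective_iff_bijective.mp (hBinj.comp e.symm.injective)
  set f : Polynomial F := Lagrange.interpolate Finset.univ id h with hf
  have heval : ∀ c : F, f.eval c = h c := by
    intro c
    have := Lagrange.eval_interpolate_at_node (r := h) (Set.injOn_id _) (Finset.mem_univ c)
    exact this
  refine ⟨f, ?_, ?_⟩
  · have hST : S = T ∪ {P0, Q0} := by
      rw [hT, Set.diff_union_of_subset hpair]
    rw [hST, Sf]
    congr 1
    ext x
    constructor
    · rintro hx
      exact ⟨A ⟨x, hx⟩, ((hmk ⟨x, hx⟩).trans
        ((mkvec_eq_iff _ _ _ _ _ _).mpr ⟨rfl, ((heval _).trans (hhA _)).symm⟩))⟩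
    · rintro ⟨c, rfl⟩
      have ht : (e.symm c : Projectivization F (Fin 3 → F)) ∈ T := (e.symm c).2
      have : Projectivization.mk F ![c, f.eval c, 1] (vec3_ne_zero_last _ _) =
          ((e.symm c : T) : Projectivization F (Fin 3 → F)) := by
        rw [hmk (e.symm c)]
        refine (mkvec_eq_iff _ _ _ _ _ _).mpr ⟨?_, ?_⟩
        · exact (e.apply_symm_apply c).symm
        · rw [heval]; rfl
      rw [this]; exact ht
  · have : (fun x : F => f.eval x) = h := funext heval
    rw [this]; exact hhbij

section transfer
variable {F : Type} [Field F]

lemma map_submodule (g : (Fin 3 → F) ≃ₗ[F] (Fin 3 → F)) (x : Projectivization F (Fin 3 → F)) :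
    (Projectivization.map g.toLinearMap g.injective x).submodule =
      x.submodule.map g.toLinearMap := by
  conv_lhs => rw [← x.mk_rep]
  rw [Projectivization.map_mk, Projectivization.submodule_mk, Projectivization.submodule_eq,
    Submodule.map_span, Set.image_singleton]
end transfer

theorem statement1 (F : Type) [Field F] [Fintype F]
    (S : Set (Projectivization F (Fin 3 → F)))
    (hcard : S.ncard = Fintype.card F + 2)
    (P Q : Projectivization F (Fin 3 → F)) (hP : P ∈ S) (hQ : Q ∈ S) (hPQ : P ≠ Q)
    (hlineP : ∀ W : Submodule F (Fin 3 → F), Module.finrank F W = 2 →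
      P.submodule ≤ W → {x ∈ S | x.submodule ≤ W}.ncard ≤ 2)
    (hlineQ : ∀ W : Submodule F (Fin 3 → F), Module.finrank F W = 2 →
      Q.submodule ≤ W → {x ∈ S | x.submodule ≤ W}.ncard ≤ 2) :
    ∃ (f : Polynomial F) (g : (Fin 3 → F) ≃ₗ[F] (Fin 3 → F)),
      Projectivization.map g.toLinearMap g.injective '' S = Sf f ∧
      Function.Bijective fun x : F => f.eval x := by
  classical
  -- build a basis whose first two vectors represent P and Q
  have hli2 : LinearIndependent F ![P.rep, Q.rep] := by
    rw [linearIndependent_fin2]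
    refine ⟨Q.rep_nonzero, fun a ha => ?_⟩
    have ha0 : a ≠ 0 := by
      rintro rfl; exact P.rep_nonzero (by simpa using ha.symm)
    apply hPQ
    conv_lhs => rw [← P.mk_rep]
    conv_rhs => rw [← Q.mk_rep]
    rw [Projectivization.mk_eq_mk_iff]
    exact ⟨Units.mk0 a ha0, by simpa [Units.smul_def] using ha⟩
  obtain ⟨w, hli3⟩ := exists_linearIndependent_snoc_of_lt_finrank hli2 (by simp)
  have hsnoc : (Fin.snoc ![P.rep, Q.rep] w : Fin 3 → Fin 3 → F) = ![P.rep, Q.rep, w] := by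
    funext i
    fin_cases i <;> rfl
  rw [hsnoc] at hli3
  have hcard3 : Fintype.card (Fin 3) = Module.finrank F (Fin 3 → F) := by simp
  set b := basisOfLinearIndependentOfCardEqFinrank hli3 hcard3 with hb
  have hbcoe : ⇑b = ![P.rep, Q.rep, w] := coe_basisOfLinearIndependentOfCardEqFinrank _ _
  set g : (Fin 3 → F) ≃ₗ[F] (Fin 3 → F) := b.equivFun with hg
  have hgP : g P.rep = ![1, 0, 0] := by
    have : P.rep = b 0 := by rw [hbcoe]; rfl
    rw [this, hg]
    funext j; rw [Basis.equivFun_self]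
    fin_cases j <;> simp
  have hgQ : g Q.rep = ![0, 1, 0] := by
    have : Q.rep = b 1 := by rw [hbcoe]; rfl
    rw [this, hg]
    funext j; rw [Basis.equivFun_self]
    fin_cases j <;> simp
  set gm := Projectivization.map g.toLinearMap g.injective with hgm
  have hgminj : Function.Injective gm :=
    Projectivization.map_injective g.toLinearMap g.injective
  set S' := gm '' S with hS'
  have hmapP : gm P = Projectivization.mk F (![1,0,0] : Fin 3 → F) vec3_e0_ne_zero := by
    conv_lhs => rw [← P.mk_rep]
    rw [hgm, Projectivization.map_mk]
    rw [Projectivization.mk_eq_mk_iff]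
    exact ⟨1, by simp [hgP]⟩
  have hmapQ : gm Q = Projectivization.mk F (![0,1,0] : Fin 3 → F) vec3_e1_ne_zero := by
    conv_lhs => rw [← Q.mk_rep]
    rw [hgm, Projectivization.map_mk]
    rw [Projectivization.mk_eq_mk_iff]
    exact ⟨1, by simp [hgQ]⟩
  -- transfer the line conditions
  have htransfer : ∀ (R : Projectivization F (Fin 3 → F)),
      (∀ W : Submodule F (Fin 3 → F), Module.finrank F W = 2 →
        R.submodule ≤ W → {x ∈ S | x.submodule ≤ W}.ncard ≤ 2) →
      ∀ W : Submodule F (Fin 3 → F), Module.finrank F W = 2 →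
        (gm R).submodule ≤ W → {x ∈ S' | x.submodule ≤ W}.ncard ≤ 2 := by
    intro R hline W hW hRW
    set W' := W.comap g.toLinearMap with hW'
    have hWmap : W' = W.map g.symm.toLinearMap := by
      rw [hW', Submodule.comap_equiv_eq_map_symm]
    have hW'rank : Module.finrank F W' = 2 := by
      rw [hWmap, LinearEquiv.finrank_map_eq, hW]
    have hle : ∀ x : Projectivization F (Fin 3 → F),
        (gm x).submodule ≤ W ↔ x.submodule ≤ W' := by
      intro x
      rw [hgm, map_submodule, Submodule.map_le_iff_le_comap, hW']
    have hseteq : {x ∈ S' | x.submodule ≤ W} = gm '' {x ∈ S | x.submodule ≤ W'} := by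
      ext y
      constructor
      · rintro ⟨⟨x, hx, rfl⟩, hyW⟩
        exact ⟨x, ⟨hx, (hle x).mp hyW⟩, rfl⟩
      · rintro ⟨x, ⟨hx, hxW⟩, rfl⟩
        exact ⟨⟨x, hx, rfl⟩, (hle x).mpr hxW⟩
    rw [hseteq, Set.ncard_image_of_injective _ hgminj]
    exact hline W' hW'rank ((hle R).mp hRW)
  have hcard' : S'.ncard = Fintype.card F + 2 := by
    rw [hS', Set.ncard_image_of_injective _ hgminj, hcard]
  obtain ⟨f, hSf, hbij⟩ := core F S' hcard'
    (hmapP ▸ Set.mem_image_of_mem gm hP)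
    (hmapQ ▸ Set.mem_image_of_mem gm hQ)
    (hmapP ▸ htransfer P hlineP)
    (hmapQ ▸ htransfer Q hlineQ)
  exact ⟨f, g, hSf, hbij⟩
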